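/- Let $m, n \in \mathbb{N}$, $p \in [0,1]$, and $x \in \mathbb{Z}^d$. There is a constant $c = c(m,n)$ (independent of $d$, $p$, $x$) such that the $n$-fold convolution of the two-point function satisfies $\tau_p^{\ast n}(x) \leq c \sum_{l=0}^{m-1} p^l J^{\ast(l+n)}(x) + c \sum_{j=1}^{n} p^{m+j-n} (J^{\ast m} \ast \tau_p^{\ast j})(x)$, where $J(x) = \mathbf{1}_{\{|x|_1=1\}}$. -/

import Mathlib

open MeasureTheory
open scoped ENNReal NNReal

/-- Vertices of the hypercubic lattice `ℤ^d`. -/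
abbrev Vertex (d : ℕ) := Fin d → ℤ

/-- A site-percolation configuration: each vertex is occupied (`true`) or vacant. -/
abbrev Config (d : ℕ) := Vertex d → Bool

/-- The ℓ¹ norm `|x|₁ = ∑ᵢ |xᵢ|`. -/
def dist1 {d : ℕ} (x : Vertex d) : ℕ := ∑ i, (x i).natAbs

/-- Nearest neighbours. -/
def IsNbr {d : ℕ} (x y : Vertex d) : Prop := dist1 (x - y) = 1

/-- `ConnIn ω S l x y`: `x` is connected to `y` by a nearest-neighbour path with at
least `l` edges all of whose internal vertices are occupied in `ω` and lie in `S`. -/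
def ConnIn {d : ℕ} (ω : Config d) (S : Set (Vertex d)) (l : ℕ) (x y : Vertex d) : Prop :=
  x ≠ y ∧ ∃ (k : ℕ) (γ : ℕ → Vertex d), l ≤ k ∧ γ 0 = x ∧ γ k = y ∧
    (∀ i < k, IsNbr (γ i) (γ (i + 1))) ∧
    ∀ i, 0 < i → i < k → (ω (γ i) = true ∧ γ i ∈ S)

/-- `x ⟷ y` : connection by an occupied path. -/
def Conn {d : ℕ} (ω : Config d) (x y : Vertex d) : Prop := ConnIn ω Set.univ 1 x y

/-- `μ` is the law of i.i.d. Bernoulli(`p`) site percolation on `ℤ^d`. -/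
def IsBernoulli (d : ℕ) (p : ℝ) (μ : Measure (Config d)) : Prop :=
  IsProbabilityMeasure μ ∧
  ∀ (s : Finset (Vertex d)) (b : Vertex d → Bool),
    μ {ω | ∀ v ∈ s, ω v = b v} = ∏ v ∈ s, ENNReal.ofReal (if b v then p else 1 - p)

/-- The two-point function `τ_p(x)`. -/
noncomputable def tau {d : ℕ} (μ : Measure (Config d)) (x : Vertex d) : ℝ≥0∞ :=
  μ {ω | Conn ω 0 x}

/-- `τ_p^{(l)}(x)`: probability of a connection using at least `l` edges. -/
noncomputable def tauL {d : ℕ} (μ : Measure (Config d)) (l : ℕ) (x : Vertex d) : ℝ≥0∞ :=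
  μ {ω | ConnIn ω Set.univ l 0 x}

/-- `J(x) = 𝟙{|x|₁ = 1}` (ℝ≥0∞-valued). -/
noncomputable def Jfun {d : ℕ} (x : Vertex d) : ℝ≥0∞ := if dist1 x = 1 then 1 else 0

/-- `m`-fold convolution `J^{*m}` (ℝ≥0∞-valued). -/
noncomputable def Jpow {d : ℕ} : ℕ → Vertex d → ℝ≥0∞
  | 0, x => if x = 0 then 1 else 0
  | m + 1, x => ∑' y, Jfun y * Jpow m (x - y)

/-- `n`-fold convolution `τ_p^{*n}`. -/
noncomputable def taupow {d : ℕ} (μ : Measure (Config d)) : ℕ → Vertex d → ℝ≥0∞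
  | 0, x => if x = 0 then 1 else 0
  | n + 1, x => ∑' y, tau μ y * taupow μ n (x - y)

noncomputable def conv {d : ℕ} (f g : Vertex d → ℝ≥0∞) (x : Vertex d) : ℝ≥0∞ :=
  ∑' y, f y * g (x - y)

lemma conv_comm {d : ℕ} (f g : Vertex d → ℝ≥0∞) (x : Vertex d) :
    conv f g x = conv g f x := by
  unfold conv
  rw [← Equiv.tsum_eq (Equiv.subLeft x) (fun y => g y * f (x - y))]
  simp [Equiv.subLeft, mul_comm]

lemma conv_mono {d : ℕ} {f f' g g' : Vertex d → ℝ≥0∞} (hf : ∀ x, f x ≤ f' x)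
    (hg : ∀ x, g x ≤ g' x) (x : Vertex d) : conv f g x ≤ conv f' g' x :=
  ENNReal.tsum_le_tsum fun y => mul_le_mul' (hf y) (hg _)

lemma conv_add {d : ℕ} (f g h : Vertex d → ℝ≥0∞) (x : Vertex d) :
    conv f (fun z => g z + h z) x = conv f g x + conv f h x := by
  unfold conv
  rw [← ENNReal.tsum_add]
  exact tsum_congr fun y => by rw [mul_add]

lemma conv_smul {d : ℕ} (c : ℝ≥0∞) (f g : Vertex d → ℝ≥0∞) (x : Vertex d) :
    conv f (fun z => c * g z) x = c * conv f g x := by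
  unfold conv
  rw [← ENNReal.tsum_mul_left]
  exact tsum_congr fun y => by ring

lemma conv_assoc {d : ℕ} (f g h : Vertex d → ℝ≥0∞) (x : Vertex d) :
    conv (conv f g) h x = conv f (conv g h) x := by
  unfold conv
  calc ∑' z, (∑' y, f y * g (z - y)) * h (x - z)
      = ∑' z, ∑' y, f y * g (z - y) * h (x - z) := by
        exact tsum_congr fun z => by rw [ENNReal.tsum_mul_right]
    _ = ∑' y, ∑' z, f y * g (z - y) * h (x - z) := ENNReal.tsum_comm
    _ = ∑' y, ∑' w, f y * g w * h (x - (y + w)) := by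
        refine tsum_congr fun y => ?_
        rw [← Equiv.tsum_eq (Equiv.addLeft y) (fun z => f y * g (z - y) * h (x - z))]
        simp [Equiv.addLeft, add_sub_cancel_left]
    _ = ∑' y, f y * ∑' w, g w * h (x - y - w) := by
        refine tsum_congr fun y => ?_
        rw [← ENNReal.tsum_mul_left]
        exact tsum_congr fun w => by rw [sub_sub, mul_assoc]

noncomputable def deltafun {d : ℕ} (x : Vertex d) : ℝ≥0∞ := if x = 0 then 1 else 0

lemma conv_delta_left {d : ℕ} (f : Vertex d → ℝ≥0∞) (x : Vertex d) :
    conv deltafun f x = f x := by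
  unfold conv
  rw [tsum_eq_single 0 (fun b hb => by simp [deltafun, hb])]
  simp [deltafun]

lemma conv_delta_right {d : ℕ} (f : Vertex d → ℝ≥0∞) (x : Vertex d) :
    conv f deltafun x = f x := by rw [conv_comm, conv_delta_left]

lemma Jpow_zero {d : ℕ} : (Jpow 0 : Vertex d → ℝ≥0∞) = deltafun := rfl

lemma Jpow_succ {d : ℕ} (m : ℕ) : (Jpow (m+1) : Vertex d → ℝ≥0∞) = conv Jfun (Jpow m) := rfl

lemma taupow_zero {d : ℕ} (μ : Measure (Config d)) : taupow μ 0 = deltafun := rfl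

lemma taupow_succ {d : ℕ} (μ : Measure (Config d)) (n : ℕ) :
    taupow μ (n+1) = conv (tau μ) (taupow μ n) := rfl

lemma conv_Jpow_left {d : ℕ} (s : ℕ) (f : Vertex d → ℝ≥0∞) (x : Vertex d) :
    conv Jfun (conv (Jpow s) f) x = conv (Jpow (s+1)) f x := by
  rw [← conv_assoc, ← Jpow_succ]

lemma Jpow_comm_conv {d : ℕ} (s : ℕ) : conv (Jpow s) Jfun = (Jpow (s+1) : Vertex d → ℝ≥0∞) :=
  funext fun z => by rw [conv_comm]; rfl

lemma star_step {d : ℕ} {μ : Measure (Config d)} {q : ℝ≥0∞}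
    (hstep : ∀ x, tau μ x ≤ Jfun x + q * conv Jfun (tau μ) x) (s j : ℕ) (x : Vertex d) :
    conv (Jpow s) (taupow μ (j+1)) x ≤
      conv (Jpow (s+1)) (taupow μ j) x + q * conv (Jpow (s+1)) (taupow μ (j+1)) x := by
  have h1 : ∀ z, taupow μ (j+1) z ≤
      conv Jfun (taupow μ j) z + q * conv Jfun (taupow μ (j+1)) z := by
    intro z
    rw [taupow_succ]
    calc conv (tau μ) (taupow μ j) z
        ≤ conv (fun w => Jfun w + q * conv Jfun (tau μ) w) (taupow μ j) z :=
          conv_mono hstep (fun _ => le_rfl) z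
      _ = conv (taupow μ j) (fun w => Jfun w + q * conv Jfun (tau μ) w) z := conv_comm ..
      _ = conv (taupow μ j) Jfun z + q * conv (taupow μ j) (conv Jfun (tau μ)) z := by
          rw [conv_add, conv_smul]
      _ = conv Jfun (taupow μ j) z + q * conv Jfun (taupow μ (j+1)) z := by
          rw [conv_comm (taupow μ j) Jfun, conv_comm (taupow μ j) (conv Jfun (tau μ)),
            conv_assoc, taupow_succ]
  calc conv (Jpow s) (taupow μ (j+1)) x
      ≤ conv (Jpow s)
          (fun z => conv Jfun (taupow μ j) z + q * conv Jfun (taupow μ (j+1)) z) x :=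
        conv_mono (fun _ => le_rfl) h1 x
    _ = conv (Jpow s) (conv Jfun (taupow μ j)) x
        + q * conv (Jpow s) (conv Jfun (taupow μ (j+1))) x := by rw [conv_add, conv_smul]
    _ = conv (Jpow (s+1)) (taupow μ j) x + q * conv (Jpow (s+1)) (taupow μ (j+1)) x := by
        rw [← conv_assoc, ← conv_assoc, Jpow_comm_conv]

lemma expansion_G {d : ℕ} {μ : Measure (Config d)} {q : ℝ≥0∞}
    (hstep : ∀ x, tau μ x ≤ Jfun x + q * conv Jfun (tau μ) x) (t : ℕ) :
    ∀ s j x, 1 ≤ j →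
    conv (Jpow s) (taupow μ j) x ≤
      2^t * ((∑ l ∈ Finset.range t, q^l * Jpow (s + l + j) x) +
        ∑ j' ∈ Finset.Icc 1 j,
          if j ≤ t + j' then q^(t + j' - j) * conv (Jpow (s + t)) (taupow μ j') x else 0) := by
  induction t with
  | zero =>
    intro s j x hj
    have hmem : j ∈ Finset.Icc 1 j := by simp [hj]
    have := Finset.single_le_sum (f := fun j' =>
      if j ≤ 0 + j' then q^(0 + j' - j) * conv (Jpow (s + 0)) (taupow μ j') x else 0)
      (fun i _ => zero_le) hmem
    simp only [Nat.zero_add, Nat.sub_self, pow_zero, one_mul, Nat.add_zero, le_refl,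
      if_pos] at this
    simpa using this
  | succ t ih =>
    intro s j x hj
    set L := ∑ l ∈ Finset.range t, q^l * Jpow (s + l + j) x with hL
    set K : ℕ → ℝ≥0∞ := fun j'' =>
      if j ≤ t + 1 + j'' then q^(t + 1 + j'' - j) * conv (Jpow (s + t + 1)) (taupow μ j'') x
      else 0 with hK
    set Dt : ℝ≥0∞ := if j ≤ t + 1 then q^(t + 1 - j) * Jpow (s + (t + 1 - j) + j) x else 0
      with hDt
    have hterm : ∀ j' ∈ Finset.Icc 1 j,
        (if j ≤ t + j' then q^(t + j' - j) * conv (Jpow (s + t)) (taupow μ j') x else 0)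
          ≤ (if j' = 1 then Dt else K (j' - 1)) + K j' := by
      intro j' hj'
      have hj'1 : 1 ≤ j' := (Finset.mem_Icc.mp hj').1
      by_cases hc : j ≤ t + j'
      · rw [if_pos hc]
        obtain ⟨j'', rfl⟩ : ∃ j'', j' = j'' + 1 := ⟨j' - 1, by omega⟩
        have hss := star_step hstep (s + t) j'' x
        calc q^(t + (j'' + 1) - j) * conv (Jpow (s + t)) (taupow μ (j'' + 1)) x
            ≤ q^(t + (j'' + 1) - j) * (conv (Jpow (s + t + 1)) (taupow μ j'') x
              + q * conv (Jpow (s + t + 1)) (taupow μ (j'' + 1)) x) := by gcongr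
          _ = q^(t + (j'' + 1) - j) * conv (Jpow (s + t + 1)) (taupow μ j'') x
              + q^(t + (j'' + 1) - j) * q * conv (Jpow (s + t + 1)) (taupow μ (j'' + 1)) x := by
              ring
          _ ≤ (if j'' + 1 = 1 then Dt else K ((j'' + 1) - 1)) + K (j'' + 1) := by
              gcongr
              · rcases Nat.eq_zero_or_pos j'' with h0 | hpos
                · subst h0
                  rw [if_pos rfl, hDt, if_pos (by omega)]
                  have h1 : taupow μ 0 = (deltafun : Vertex d → ℝ≥0∞) := rfl
                  rw [h1, conv_delta_right]
                  have h2 : t + (0 + 1) - j = t + 1 - j := by omega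
                  have h3 : s + (t + 1 - j) + j = s + t + 1 := by omega
                  rw [h2, h3]
                · rw [if_neg (by omega)]
                  simp only [hK, Nat.add_sub_cancel]
                  rw [if_pos (by omega),
                    show t + 1 + j'' - j = t + (j'' + 1) - j by omega]
              · simp only [hK]
                rw [if_pos (by omega),
                  show t + 1 + (j'' + 1) - j = (t + (j'' + 1) - j) + 1 by omega, pow_succ]
      · rw [if_neg hc]
        exact zero_le
    have hR : (∑ j' ∈ Finset.Icc 1 j,
        if j ≤ t + j' then q^(t + j' - j) * conv (Jpow (s + t)) (taupow μ j') x else 0)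
          ≤ Dt + (∑ j' ∈ Finset.Icc 1 j, K j') + ∑ j' ∈ Finset.Icc 1 j, K j' := by
      calc (∑ j' ∈ Finset.Icc 1 j,
          if j ≤ t + j' then q^(t + j' - j) * conv (Jpow (s + t)) (taupow μ j') x else 0)
          ≤ ∑ j' ∈ Finset.Icc 1 j, ((if j' = 1 then Dt else K (j' - 1)) + K j') :=
            Finset.sum_le_sum hterm
        _ = (∑ j' ∈ Finset.Icc 1 j, (if j' = 1 then Dt else K (j' - 1)))
            + ∑ j' ∈ Finset.Icc 1 j, K j' := Finset.sum_add_distrib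
        _ ≤ (Dt + ∑ j' ∈ Finset.Icc 1 j, K j') + ∑ j' ∈ Finset.Icc 1 j, K j' := by
            gcongr
            have hIns : Finset.Icc 1 j = insert 1 (Finset.Icc 2 j) := by
              ext a; simp only [Finset.mem_Icc, Finset.mem_insert]; omega
            rw [hIns, Finset.sum_insert (by simp)]
            rw [if_pos rfl]
            gcongr
            calc (∑ j' ∈ Finset.Icc 2 j, if j' = 1 then Dt else K (j' - 1))
                = ∑ j' ∈ Finset.Icc 2 j, K (j' - 1) := by
                  refine Finset.sum_congr rfl fun i hi => ?_
                  rw [if_neg (by simp only [Finset.mem_Icc] at hi; omega)]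
              _ = ∑ i ∈ Finset.image (· - 1) (Finset.Icc 2 j), K i := by
                  rw [Finset.sum_image (fun a ha b hb hab => by
                    simp only [Finset.mem_coe, Finset.mem_Icc] at ha hb; omega)]
              _ ≤ ∑ j' ∈ insert 1 (Finset.Icc 2 j), K j' := by
                  refine Finset.sum_le_sum_of_subset fun a ha => ?_
                  simp only [Finset.mem_image, Finset.mem_Icc] at ha
                  rw [← hIns]
                  simp only [Finset.mem_Icc]
                  omega
    have hLD : L + Dt ≤ 2 * ∑ l ∈ Finset.range (t + 1), q^l * Jpow (s + l + j) x := by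
      rw [two_mul]
      gcongr
      · exact Finset.sum_le_sum_of_subset (Finset.range_subset_range.mpr (by omega))
      · rw [hDt]
        by_cases hc : j ≤ t + 1
        · rw [if_pos hc]
          exact Finset.single_le_sum (f := fun l => q^l * Jpow (s + l + j) x)
            (fun i _ => zero_le) (Finset.mem_range.mpr (by omega))
        · rw [if_neg hc]; exact zero_le
    calc conv (Jpow s) (taupow μ j) x
        ≤ 2^t * (L + ∑ j' ∈ Finset.Icc 1 j,
            if j ≤ t + j' then q^(t + j' - j) * conv (Jpow (s + t)) (taupow μ j') x else 0) :=
          ih s j x hj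
      _ ≤ 2^t * (L + (Dt + (∑ j' ∈ Finset.Icc 1 j, K j') + ∑ j' ∈ Finset.Icc 1 j, K j')) := by
          gcongr
      _ = 2^t * ((L + Dt) + 2 * ∑ j' ∈ Finset.Icc 1 j, K j') := by ring
      _ ≤ 2^t * (2 * (∑ l ∈ Finset.range (t + 1), q^l * Jpow (s + l + j) x)
            + 2 * ∑ j' ∈ Finset.Icc 1 j, K j') := by gcongr
      _ = 2^(t+1) * ((∑ l ∈ Finset.range (t + 1), q^l * Jpow (s + l + j) x)
            + ∑ j' ∈ Finset.Icc 1 j, K j') := by ring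

def cyl {d : ℕ} (s : Finset (Vertex d)) (b : Vertex d → Bool) : Set (Config d) :=
  {ω | ∀ v ∈ s, ω v = b v}

lemma measurableSet_eval {d : ℕ} (v : Vertex d) (c : Bool) :
    MeasurableSet {ω : Config d | ω v = c} := by
  have : {ω : Config d | ω v = c} = (fun ω : Config d => ω v) ⁻¹' {c} := by
    ext ω; simp
  rw [this]
  exact (measurable_pi_apply v) (measurableSet_singleton c)

lemma measurableSet_cyl {d : ℕ} (s : Finset (Vertex d)) (b : Vertex d → Bool) :
    MeasurableSet (cyl s b) := by
  have : cyl s b = ⋂ v ∈ s, {ω : Config d | ω v = b v} := by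
    ext ω; simp [cyl]
  rw [this]
  exact MeasurableSet.biInter s.countable_toSet (fun v _ => measurableSet_eval v (b v))

def CylOn {d : ℕ} (T : Set (Vertex d)) : Set (Set (Config d)) :=
  {A | ∃ s : Finset (Vertex d), ↑s ⊆ T ∧ ∃ b, A = cyl s b}

lemma generateFrom_cylOn_le {d : ℕ} (T : Set (Vertex d)) :
    MeasurableSpace.generateFrom (CylOn T) ≤ (inferInstance : MeasurableSpace (Config d)) := by
  refine MeasurableSpace.generateFrom_le ?_
  rintro _ ⟨s, _, b, rfl⟩
  exact measurableSet_cyl s b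

lemma isPiSystem_cylOn {d : ℕ} (T : Set (Vertex d)) : IsPiSystem (CylOn T) := by
  rintro _ ⟨s₁, hs₁, b₁, rfl⟩ _ ⟨s₂, hs₂, b₂, rfl⟩ hne
  obtain ⟨ω₀, hω₁, hω₂⟩ := hne
  refine ⟨s₁ ∪ s₂, by rw [Finset.coe_union]; exact Set.union_subset hs₁ hs₂,
    fun v => ω₀ v, ?_⟩
  ext ω
  simp only [cyl, Set.mem_inter_iff, Set.mem_setOf_eq, Finset.mem_union]
  constructor
  · rintro ⟨h1, h2⟩ v hv
    rcases hv with hv | hv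
    · rw [h1 v hv, ← hω₁ v hv]
    · rw [h2 v hv, ← hω₂ v hv]
  · intro h
    constructor
    · intro v hv; rw [h v (Or.inl hv), hω₁ v hv]
    · intro v hv; rw [h v (Or.inr hv), hω₂ v hv]

lemma pi_le_generateFrom_cylOn_univ {d : ℕ} :
    (inferInstance : MeasurableSpace (Config d)) ≤
      MeasurableSpace.generateFrom (CylOn (Set.univ : Set (Vertex d))) := by
  have h : @Measurable (Config d) (Config d)
      (MeasurableSpace.generateFrom (CylOn (Set.univ : Set (Vertex d)))) _ id := by
    refine (@measurable_pi_iff _ _ _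
      (MeasurableSpace.generateFrom (CylOn (Set.univ : Set (Vertex d)))) _ id).mpr ?_
    intro v
    refine @measurable_to_countable' Bool (Config d) _ _
      (MeasurableSpace.generateFrom (CylOn (Set.univ : Set (Vertex d)))) _ ?_
    intro c
    have : (fun ω : Config d => (id ω) v) ⁻¹' {c} = cyl {v} (fun _ => c) := by
      ext ω; simp [cyl]
    rw [this]
    exact MeasurableSpace.measurableSet_generateFrom ⟨{v}, by simp, fun _ => c, rfl⟩
  intro A hA
  exact h hA

lemma measurable_update_false {d : ℕ} (y : Vertex d) :
    @Measurable (Config d) (Config d)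
      (MeasurableSpace.generateFrom (CylOn ({y}ᶜ : Set (Vertex d)))) _
      (fun ω => Function.update ω y false) := by
  refine (@measurable_pi_iff _ _ _
    (MeasurableSpace.generateFrom (CylOn ({y}ᶜ : Set (Vertex d)))) _ _).mpr ?_
  intro v
  by_cases hv : v = y
  · subst hv
    have : (fun ω : Config d => Function.update ω v false v) = fun _ => false := by
      funext ω; simp
    rw [this]
    exact @measurable_const _ _ _
      (MeasurableSpace.generateFrom (CylOn ({v}ᶜ : Set (Vertex d)))) _
  · have : (fun ω : Config d => Function.update ω y false v) = fun ω => ω v := by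
      funext ω; simp [Function.update_of_ne hv]
    rw [this]
    refine @measurable_to_countable' Bool (Config d) _ _
      (MeasurableSpace.generateFrom (CylOn ({y}ᶜ : Set (Vertex d)))) _ ?_
    intro c
    have : (fun ω : Config d => ω v) ⁻¹' {c} = cyl {v} (fun _ => c) := by
      ext ω; simp [cyl]
    rw [this]
    exact MeasurableSpace.measurableSet_generateFrom
      ⟨{v}, by simp only [Finset.coe_singleton, Set.singleton_subset_iff,
        Set.mem_compl_iff, Set.mem_singleton_iff]; exact hv, fun _ => c, rfl⟩

lemma bernoulli_cyl {d : ℕ} {p : ℝ} {μ : Measure (Config d)} (hμ : IsBernoulli d p μ)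
    (s : Finset (Vertex d)) (b : Vertex d → Bool) :
    μ (cyl s b) = ∏ v ∈ s, ENNReal.ofReal (if b v then p else 1 - p) := hμ.2 s b

lemma bernoulli_eval_true {d : ℕ} {p : ℝ} {μ : Measure (Config d)} (hμ : IsBernoulli d p μ)
    (y : Vertex d) : μ {ω | ω y = true} = ENNReal.ofReal p := by
  have h := hμ.2 {y} (fun _ => true)
  simpa using h

lemma bernoulli_indep {d : ℕ} {p : ℝ} {μ : Measure (Config d)} (hμ : IsBernoulli d p μ)
    (y : Vertex d) (A : Set (Config d)) (hA : MeasurableSet A)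
    (hinv : (fun ω => Function.update ω y false) ⁻¹' A = A) :
    μ (A ∩ {ω | ω y = true}) = ENNReal.ofReal p * μ A := by
  haveI := hμ.1
  have hAgen : MeasurableSet[MeasurableSpace.generateFrom (CylOn ({y}ᶜ : Set (Vertex d)))] A := by
    rw [← hinv]; exact measurable_update_false y hA
  have hY : MeasurableSet {ω : Config d | ω y = true} := measurableSet_eval y true
  have hYval : μ {ω : Config d | ω y = true} = ENNReal.ofReal p := bernoulli_eval_true hμ y
  refine MeasurableSpace.induction_on_inter
    (m := MeasurableSpace.generateFrom (CylOn ({y}ᶜ : Set (Vertex d))))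
    (C := fun A _ => μ (A ∩ {ω | ω y = true}) = ENNReal.ofReal p * μ A)
    (s := CylOn ({y}ᶜ : Set (Vertex d))) rfl (isPiSystem_cylOn _) (by simp) ?_ ?_ ?_ _ hAgen
  · -- basic
    rintro _ ⟨s, hs, b, rfl⟩
    have hy : y ∉ s := fun h => hs (Finset.mem_coe.mpr h) rfl
    have hset : cyl s b ∩ {ω : Config d | ω y = true}
        = cyl (insert y s) (Function.update b y true) := by
      ext ω
      simp only [cyl, Set.mem_inter_iff, Set.mem_setOf_eq, Finset.mem_insert]
      constructor
      · rintro ⟨h1, h2⟩ v hv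
        rcases hv with rfl | hv
        · rw [Function.update_self]; exact h2
        · rw [Function.update_of_ne (by rintro rfl; exact hy hv)]; exact h1 v hv
      · intro h
        refine ⟨fun v hv => ?_, ?_⟩
        · have hv' := h v (Or.inr hv)
          rwa [Function.update_of_ne (by rintro rfl; exact hy hv)] at hv'
        · have hv' := h y (Or.inl rfl)
          rwa [Function.update_self] at hv'
    rw [hset, bernoulli_cyl hμ, bernoulli_cyl hμ, Finset.prod_insert hy,
      Function.update_self]
    simp only [if_true]
    congr 1
    exact Finset.prod_congr rfl fun v hv => by
      rw [Function.update_of_ne (by rintro rfl; exact hy hv)]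
  · -- compl
    intro t htgen hC
    have ht : MeasurableSet t := generateFrom_cylOn_le _ t htgen
    have h1 : μ (t ∩ {ω : Config d | ω y = true}) + μ (tᶜ ∩ {ω : Config d | ω y = true})
        = μ {ω : Config d | ω y = true} := by
      have := measure_inter_add_diff (μ := μ) {ω : Config d | ω y = true} ht
      rw [Set.diff_eq] at this
      rw [Set.inter_comm t _, Set.inter_comm tᶜ _]
      exact this
    have h2 : μ t + μ tᶜ = 1 := by
      rw [measure_add_measure_compl ht]; exact measure_univ
    have key : μ (t ∩ {ω : Config d | ω y = true}) + μ (tᶜ ∩ {ω : Config d | ω y = true})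
        = μ (t ∩ {ω : Config d | ω y = true}) + ENNReal.ofReal p * μ tᶜ := by
      rw [h1, hYval, hC, ← mul_add, h2, mul_one]
    exact (ENNReal.add_right_inj (measure_ne_top μ _)).mp key
  · -- union
    intro f hdisj hmeasgen hC
    have hmeas : ∀ i, MeasurableSet (f i) := fun i => generateFrom_cylOn_le _ _ (hmeasgen i)
    rw [Set.iUnion_inter, measure_iUnion
        (hdisj.mono fun i j h => h.mono Set.inter_subset_left Set.inter_subset_left)
        (fun i => (hmeas i).inter hY),
      measure_iUnion hdisj hmeas]
    rw [← ENNReal.tsum_mul_left]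
    exact tsum_congr hC

lemma measurable_shift {d : ℕ} (y : Vertex d) :
    Measurable (fun ω : Config d => fun v => ω (v + y)) :=
  measurable_pi_iff.mpr fun v => measurable_pi_apply (v + y)

lemma bernoulli_map_shift {d : ℕ} {p : ℝ} {μ : Measure (Config d)} (hμ : IsBernoulli d p μ)
    (y : Vertex d) :
    Measure.map (fun ω : Config d => fun v => ω (v + y)) μ = μ := by
  haveI := hμ.1
  haveI : IsProbabilityMeasure (Measure.map (fun ω : Config d => fun v => ω (v + y)) μ) :=
    Measure.isProbabilityMeasure_map (measurable_shift y).aemeasurable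
  refine MeasureTheory.ext_of_generate_finite (CylOn (Set.univ : Set (Vertex d)))
    (le_antisymm pi_le_generateFrom_cylOn_univ (generateFrom_cylOn_le _))
    (isPiSystem_cylOn _) ?_ (by simp)
  rintro _ ⟨s, -, b, rfl⟩
  rw [Measure.map_apply (measurable_shift y) (measurableSet_cyl s b)]
  have hpre : (fun ω : Config d => fun v => ω (v + y)) ⁻¹' cyl s b
      = cyl (s.image (· + y)) (fun w => b (w - y)) := by
    ext ω
    simp only [cyl, Set.mem_preimage, Set.mem_setOf_eq, Finset.mem_image]
    constructor
    · rintro h w ⟨v, hv, rfl⟩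
      rw [add_sub_cancel_right]; exact h v hv
    · intro h v hv
      have h2 := h (v + y) ⟨v, hv, rfl⟩
      rwa [add_sub_cancel_right] at h2
  rw [hpre, bernoulli_cyl hμ, bernoulli_cyl hμ,
    Finset.prod_image (fun a _ b _ h => by exact add_right_cancel h)]
  exact Finset.prod_congr rfl fun v _ => by rw [add_sub_cancel_right]

def pathExt {d k : ℕ} (γ : Fin (k+1) → Vertex d) (i : ℕ) : Vertex d :=
  γ ⟨min i k, Nat.lt_succ_of_le (Nat.min_le_right i k)⟩

lemma measurableSet_connIn {d : ℕ} (S : Set (Vertex d)) (l : ℕ) (a b : Vertex d) :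
    MeasurableSet {ω : Config d | ConnIn ω S l a b} := by
  have hset : {ω : Config d | ConnIn ω S l a b} =
      ⋃ (k : ℕ), ⋃ (γ : Fin (k+1) → Vertex d),
        ({_ω : Config d | a ≠ b ∧ l ≤ k ∧ pathExt γ 0 = a ∧ pathExt γ k = b ∧
            (∀ i < k, IsNbr (pathExt γ i) (pathExt γ (i + 1))) ∧
            ∀ i, 0 < i → i < k → pathExt γ i ∈ S}
          ∩ ⋂ i ∈ Finset.Ioo 0 k, {ω : Config d | ω (pathExt γ i) = true}) := by
    ext ω
    simp only [Set.mem_setOf_eq, Set.mem_iUnion, Set.mem_inter_iff, Set.mem_iInter,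
      Finset.mem_Ioo]
    constructor
    · rintro ⟨hne, k, γ, hk, h0, hkb, hnbr, hocc⟩
      refine ⟨k, fun i => γ i, ⟨hne, hk, ?_, ?_, ?_, ?_⟩, ?_⟩
      · show γ (min 0 k) = a; rw [Nat.min_eq_left (Nat.zero_le k)]; exact h0
      · show γ (min k k) = b; rw [Nat.min_self]; exact hkb
      · intro i hi
        show IsNbr (γ (min i k)) (γ (min (i+1) k))
        rw [Nat.min_eq_left (le_of_lt hi), Nat.min_eq_left hi]
        exact hnbr i hi
      · intro i hi1 hi2
        show γ (min i k) ∈ S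
        rw [Nat.min_eq_left (le_of_lt hi2)]
        exact (hocc i hi1 hi2).2
      · intro i hi
        show ω (γ (min i k)) = true
        rw [Nat.min_eq_left (le_of_lt hi.2)]
        exact (hocc i hi.1 hi.2).1
    · rintro ⟨k, γ, ⟨hne, hk, h0, hkb, hnbr, hS⟩, hocc⟩
      exact ⟨hne, k, pathExt γ, hk, h0, hkb, hnbr,
        fun i hi1 hi2 => ⟨hocc i ⟨hi1, hi2⟩, hS i hi1 hi2⟩⟩
  rw [hset]
  refine MeasurableSet.iUnion fun k => MeasurableSet.iUnion fun γ => ?_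
  refine (MeasurableSet.const _).inter ?_
  exact MeasurableSet.biInter (Finset.Ioo 0 k).countable_toSet
    (fun i _ => measurableSet_eval (pathExt γ i) true)

lemma dist1_neg {d : ℕ} (x : Vertex d) : dist1 (-x) = dist1 x := by
  unfold dist1
  exact Finset.sum_congr rfl fun i _ => by simp

lemma conn_first_step {d : ℕ} {ω : Config d} {x : Vertex d} (hx : dist1 x ≠ 1)
    (h : Conn ω 0 x) : ∃ y, dist1 y = 1 ∧ ω y = true ∧ Conn ω y x := by
  obtain ⟨hne, k, γ, hk, h0, hkb, hnbr, hocc⟩ := h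
  have hk1 : 1 ≤ k := hk
  have hk2 : 2 ≤ k := by
    by_contra hlt
    have hke : k = 1 := by omega
    subst hke
    have h1 := hnbr 0 (by omega)
    rw [h0, hkb] at h1
    unfold IsNbr at h1
    rw [zero_sub, dist1_neg] at h1
    exact hx h1
  refine ⟨γ 1, ?_, (hocc 1 (by omega) (by omega)).1, ?_⟩
  · have := hnbr 0 (by omega)
    rw [h0] at this
    unfold IsNbr at this
    rwa [zero_sub, dist1_neg] at this
  · have hne1 : γ 1 ≠ x := by
      intro heq
      apply hx
      have := hnbr 0 (by omega)
      rw [h0, heq] at this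
      unfold IsNbr at this
      rwa [zero_sub, dist1_neg] at this
    refine ⟨hne1, k - 1, fun i => γ (1 + i), by omega, rfl, ?_, ?_, ?_⟩
    · show γ (1 + (k - 1)) = x
      rw [show 1 + (k - 1) = k by omega]; exact hkb
    · intro i hi
      have := hnbr (1 + i) (by omega)
      rwa [show 1 + i + 1 = 1 + (i + 1) by omega] at this
    · intro i hi1 hi2
      exact ⟨(hocc (1 + i) (by omega) (by omega)).1, Set.mem_univ _⟩

lemma conn_avoid {d : ℕ} {ω : Config d} {y x : Vertex d} (h : Conn ω y x) :
    ConnIn ω ({y}ᶜ : Set (Vertex d)) 1 y x := by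
  obtain ⟨hne, k, γ, hk, h0, hkb, hnbr, hocc⟩ := h
  classical
  set i0 := Nat.findGreatest (fun i => γ i = y) (k - 1) with hi0
  have hP : γ i0 = y := Nat.findGreatest_spec (P := fun i => γ i = y) (Nat.zero_le _) h0
  have hi0le : i0 ≤ k - 1 := Nat.findGreatest_le _
  have hkpos : 1 ≤ k := hk
  have hi0lt : i0 < k := by omega
  refine ⟨hne, k - i0, fun j => γ (i0 + j), by omega, by simpa using hP, ?_, ?_, ?_⟩
  · show γ (i0 + (k - i0)) = x
    rw [show i0 + (k - i0) = k by omega]; exact hkb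
  · intro i hi
    exact hnbr (i0 + i) (by omega)
  · intro i hi1 hi2
    refine ⟨(hocc (i0 + i) (by omega) (by omega)).1, ?_⟩
    simp only [Set.mem_compl_iff, Set.mem_singleton_iff]
    intro heq
    exact Nat.findGreatest_is_greatest (P := fun i => γ i = y) (n := k - 1)
      (by rw [← hi0]; omega) (by omega) heq

lemma connIn_avoid_update {d : ℕ} (ω : Config d) (y a x : Vertex d) :
    (fun ω : Config d => Function.update ω y false) ⁻¹'
      {ω : Config d | ConnIn ω ({y}ᶜ : Set (Vertex d)) 1 a x}
    = {ω : Config d | ConnIn ω ({y}ᶜ : Set (Vertex d)) 1 a x} := by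
  ext ω'
  simp only [Set.mem_preimage, Set.mem_setOf_eq]
  constructor <;>
    (rintro ⟨hne, k, γ, hk, h0, hkb, hnbr, hocc⟩
     refine ⟨hne, k, γ, hk, h0, hkb, hnbr, fun i hi1 hi2 => ?_⟩
     have hmem := (hocc i hi1 hi2).2
     have hne' : γ i ≠ y := by
       simpa using hmem
     refine ⟨?_, hmem⟩
     have := (hocc i hi1 hi2).1)
  · rwa [Function.update_of_ne hne'] at this
  · rwa [Function.update_of_ne hne']

lemma connIn_sub_conn {d : ℕ} {ω : Config d} {S : Set (Vertex d)} {y x : Vertex d}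
    (h : ConnIn ω S 1 y x) : Conn ω y x := by
  obtain ⟨hne, k, γ, hk, h0, hkb, hnbr, hocc⟩ := h
  exact ⟨hne, k, γ, hk, h0, hkb, hnbr,
    fun i hi1 hi2 => ⟨(hocc i hi1 hi2).1, Set.mem_univ _⟩⟩

lemma conn_shift_iff {d : ℕ} (ω : Config d) (y x : Vertex d) :
    Conn (fun v => ω (v + y)) 0 (x - y) ↔ Conn ω y x := by
  constructor
  · rintro ⟨hne, k, γ, hk, h0, hkb, hnbr, hocc⟩
    refine ⟨fun h => hne (by rw [h, sub_self]), k, fun i => γ i + y, hk,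
      by show γ 0 + y = y; rw [h0, zero_add],
      by show γ k + y = x; rw [hkb, sub_add_cancel], ?_, ?_⟩
    · intro i hi
      have h2 := hnbr i hi
      unfold IsNbr at h2 ⊢
      rwa [add_sub_add_right_eq_sub]
    · intro i hi1 hi2
      exact ⟨(hocc i hi1 hi2).1, Set.mem_univ _⟩
  · rintro ⟨hne, k, γ, hk, h0, hkb, hnbr, hocc⟩
    refine ⟨fun h => hne (sub_eq_zero.mp h.symm).symm, k, fun i => γ i - y, hk,
      by show γ 0 - y = 0; rw [h0, sub_self],
      by show γ k - y = x - y; rw [hkb], ?_, ?_⟩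
    · intro i hi
      have h2 := hnbr i hi
      unfold IsNbr at h2 ⊢
      rwa [sub_sub_sub_cancel_right]
    · intro i hi1 hi2
      refine ⟨?_, Set.mem_univ _⟩
      show ω (γ i - y + y) = true
      rw [sub_add_cancel]
      exact (hocc i hi1 hi2).1

lemma tau_shift {d : ℕ} {p : ℝ} {μ : Measure (Config d)} (hμ : IsBernoulli d p μ)
    (y x : Vertex d) : μ {ω : Config d | Conn ω y x} = tau μ (x - y) := by
  have hpre : {ω : Config d | Conn ω y x}
      = (fun ω : Config d => fun v => ω (v + y)) ⁻¹' {ω : Config d | Conn ω 0 (x - y)} := by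
    ext ω
    simp only [Set.mem_preimage, Set.mem_setOf_eq]
    exact (conn_shift_iff ω y x).symm
  have hms : MeasurableSet {ω : Config d | Conn ω 0 (x - y)} :=
    measurableSet_connIn Set.univ 1 0 (x - y)
  rw [hpre, ← Measure.map_apply (measurable_shift y) hms, bernoulli_map_shift hμ]
  rfl

lemma tau_step {d : ℕ} {p : ℝ} {μ : Measure (Config d)} (hμ : IsBernoulli d p μ)
    (x : Vertex d) :
    tau μ x ≤ Jfun x + ENNReal.ofReal p * conv Jfun (tau μ) x := by
  haveI := hμ.1
  by_cases hx : dist1 x = 1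
  · have h1 : tau μ x ≤ 1 := prob_le_one
    have h2 : Jfun x = 1 := if_pos hx
    calc tau μ x ≤ 1 := h1
      _ ≤ Jfun x + ENNReal.ofReal p * conv Jfun (tau μ) x := by
          rw [h2]; exact le_self_add
  · have hsub : {ω : Config d | Conn ω 0 x} ⊆
        ⋃ y : Vertex d, {ω : Config d | dist1 y = 1 ∧ ω y = true ∧ Conn ω y x} := by
      intro ω hω
      obtain ⟨y, h1, h2, h3⟩ := conn_first_step hx hω
      exact Set.mem_iUnion.mpr ⟨y, h1, h2, h3⟩
    have hEy : ∀ y : Vertex d, μ {ω : Config d | dist1 y = 1 ∧ ω y = true ∧ Conn ω y x}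
        ≤ Jfun y * (ENNReal.ofReal p * tau μ (x - y)) := by
      intro y
      by_cases hy : dist1 y = 1
      · have hJ : Jfun y = (1 : ℝ≥0∞) := if_pos hy
        rw [hJ, one_mul]
        have hA : {ω : Config d | dist1 y = 1 ∧ ω y = true ∧ Conn ω y x}
            ⊆ {ω : Config d | ConnIn ω ({y}ᶜ : Set (Vertex d)) 1 y x} ∩ {ω | ω y = true} := by
          rintro ω ⟨-, h2, h3⟩
          exact ⟨conn_avoid h3, h2⟩
        calc μ {ω : Config d | dist1 y = 1 ∧ ω y = true ∧ Conn ω y x}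
            ≤ μ ({ω : Config d | ConnIn ω ({y}ᶜ : Set (Vertex d)) 1 y x} ∩ {ω | ω y = true}) :=
              measure_mono hA
          _ = ENNReal.ofReal p * μ {ω : Config d | ConnIn ω ({y}ᶜ : Set (Vertex d)) 1 y x} :=
              bernoulli_indep hμ y _ (measurableSet_connIn _ _ _ _)
                (connIn_avoid_update (fun _ => false) y y x)
          _ ≤ ENNReal.ofReal p * μ {ω : Config d | Conn ω y x} := by
              exact mul_le_mul_right
                (measure_mono (fun ω (h : ConnIn ω ({y}ᶜ : Set (Vertex d)) 1 y x) =>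
                  connIn_sub_conn h)) _
          _ = ENNReal.ofReal p * tau μ (x - y) := by rw [tau_shift hμ]
      · have hempty : {ω : Config d | dist1 y = 1 ∧ ω y = true ∧ Conn ω y x} = ∅ := by
          ext ω; simp [hy]
        rw [hempty]
        simp
    have hle2 : tau μ x ≤ ∑' y : Vertex d, Jfun y * (ENNReal.ofReal p * tau μ (x - y)) := by
      calc tau μ x
          ≤ μ (⋃ y : Vertex d, {ω : Config d | dist1 y = 1 ∧ ω y = true ∧ Conn ω y x}) :=
            measure_mono hsub
        _ ≤ ∑' y : Vertex d, μ {ω : Config d | dist1 y = 1 ∧ ω y = true ∧ Conn ω y x} :=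
            measure_iUnion_le _
        _ ≤ _ := ENNReal.tsum_le_tsum hEy
    calc tau μ x ≤ ∑' y : Vertex d, Jfun y * (ENNReal.ofReal p * tau μ (x - y)) := hle2
      _ = ENNReal.ofReal p * conv Jfun (tau μ) x := by
          unfold conv
          rw [← ENNReal.tsum_mul_left]
          exact tsum_congr fun y => by ring
      _ ≤ Jfun x + ENNReal.ofReal p * conv Jfun (tau μ) x := le_add_self

/-- for `m, n ≥ 1` there is a constant `c = c(m,n)`, independent of `d`, `p`
and `x`, with
`τ_p^{*n}(x) ≤ c ∑_{l<m} p^l J^{*(l+n)}(x) + c ∑_{j=1}^n p^{m+j-n} (J^{*m} ∗ τ_p^{*j})(x)`. -/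
theorem taupow_expansion (m n : ℕ) (hm : 1 ≤ m) (hn : 1 ≤ n) :
    ∃ c : ℝ≥0, ∀ (d : ℕ) (p : ℝ), 0 ≤ p → p ≤ 1 →
      ∀ μ : Measure (Config d), IsBernoulli d p μ → ∀ x : Vertex d,
        taupow μ n x ≤
          (c : ℝ≥0∞) * ∑ l ∈ Finset.range m, ENNReal.ofReal p ^ l * Jpow (l + n) x +
          (c : ℝ≥0∞) * ∑ j ∈ Finset.Icc 1 n,
            ENNReal.ofReal p ^ ((m : ℤ) + (j : ℤ) - (n : ℤ)) *
              ∑' y, Jpow m y * taupow μ j (x - y) := by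
  refine ⟨2 ^ m, ?_⟩
  intro d p hp hp1 μ hμ x
  have hstep : ∀ z : Vertex d, tau μ z ≤ Jfun z + ENNReal.ofReal p * conv Jfun (tau μ) z :=
    fun z => tau_step hμ z
  have hG := expansion_G hstep m 0 n x hn
  have h0 : conv (Jpow 0) (taupow μ n) x = taupow μ n x := by
    rw [Jpow_zero, conv_delta_left]
  rw [h0] at hG
  refine le_trans hG ?_
  have hc : ((2 ^ m : ℝ≥0) : ℝ≥0∞) = 2 ^ m := by
    rw [ENNReal.coe_pow]; norm_num
  rw [hc, mul_add]
  refine add_le_add ?_ ?_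
  · refine le_of_eq ?_
    congr 1
    refine Finset.sum_congr rfl fun l _ => ?_
    simp only [Nat.zero_add]
  · refine mul_le_mul_right (Finset.sum_le_sum ?_) _
    intro j hj
    by_cases hcnd : n ≤ m + j
    · rw [if_pos hcnd]
      have h1 : conv (Jpow (0 + m)) (taupow μ j) x
          = ∑' y, Jpow m y * taupow μ j (x - y) := by
        simp only [Nat.zero_add]
        rfl
      rw [h1]
      have h2 : (ENNReal.ofReal p) ^ ((m : ℤ) + (j : ℤ) - (n : ℤ))
          = (ENNReal.ofReal p) ^ (m + j - n) := by
        rw [show (m : ℤ) + (j : ℤ) - (n : ℤ) = ((m + j - n : ℕ) : ℤ) by omega, zpow_natCast]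
      rw [h2]
    · rw [if_neg hcnd]
      exact zero_le
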